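/- arXiv:2509.22219 — 2 statements merged into one kernel-verified Lean document; each statement's English description precedes it below -/
import Mathlib

section
/- Let n = 2M, A ∈ SO(n), λ ∈ ℝᴹ, and B = Aᵀ(⊕ᵢ λᵢ J)A. Let x ∈ ℝⁿ, v = Ax with blocks v₁, …, v_M, assume v₁ ≠ 0, and let t₀ be valid for x. For any t ∈ ℝ set x' = exp(tB)x and v' = Ax'. Then v'ᵢ = R(tλᵢ)vᵢ for every i, v'₁ ≠ 0, the number t + t₀ is valid for x', and invRep(x'; t + t₀) = invRep(x; t₀). -/
open Matrix NormedSpace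

noncomputable section

attribute [local instance] Matrix.linftyOpNormedRing Matrix.linftyOpNormedAlgebra

/-- `R(t)`: the 2×2 rotation matrix. -/
def R2 (t : ℝ) : Matrix (Fin 2) (Fin 2) ℝ :=
  !![Real.cos t, -Real.sin t; Real.sin t, Real.cos t]

/-- `J`: the 2×2 matrix with rows (0, -1) and (1, 0). -/
def Jmat : Matrix (Fin 2) (Fin 2) ℝ := !![0, -1; 1, 0]

/-- Index type for `ℝⁿ` with `n = 2M`: component `2(i-1)+p` of block `i` is indexed `(p, i)`. -/
abbrev Idx (M : ℕ) := Fin 2 × Fin M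

/-- `SO(n)` for `n = 2M`, on the block index type. -/
def SOb (M : ℕ) : Set (Matrix (Idx M) (Idx M) ℝ) :=
  {A | Aᵀ * A = 1 ∧ A.det = 1}

/-- The block-diagonal matrix `⊕ᵢ Cᵢ`. -/
def bdiag {M : ℕ} (C : Fin M → Matrix (Fin 2) (Fin 2) ℝ) : Matrix (Idx M) (Idx M) ℝ :=
  Matrix.blockDiagonal C

/-- The `i`-th 2-dimensional block `vᵢ` of a vector `v ∈ ℝⁿ`. -/
def blk {M : ℕ} (v : Idx M → ℝ) (i : Fin M) : Fin 2 → ℝ := fun p => v (p, i)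

/-- Concatenation `u₁ ⊕ ⋯ ⊕ u_M` of 2-dimensional blocks. -/
def cat {M : ℕ} (u : Fin M → (Fin 2 → ℝ)) : Idx M → ℝ := fun pi => u pi.2 pi.1

/-- `e₁ = (1, 0) ∈ ℝ²`. -/
def e1 : Fin 2 → ℝ := ![1, 0]

/-- The Euclidean norm `‖u‖₂` of `u ∈ ℝ²`. -/
def norm2 (u : Fin 2 → ℝ) : ℝ := Real.sqrt (u 0 ^ 2 + u 1 ^ 2)

/-- `t₀` is valid for `x` (w.r.t. `A`, `λ`): `R(t₀λ₁)e₁ = v₁/‖v₁‖₂` where `v = Ax`. -/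
def valid {M : ℕ} [NeZero M] (A : Matrix (Idx M) (Idx M) ℝ) (lam : Fin M → ℝ)
    (x : Idx M → ℝ) (t₀ : ℝ) : Prop :=
  (R2 (t₀ * lam 0)).mulVec e1 = (norm2 (blk (A.mulVec x) 0))⁻¹ • blk (A.mulVec x) 0

/-- `invRep(x; t₀) = ‖v₁‖₂ e₁ ⊕ R(−t₀λ₂)v₂ ⊕ ⋯ ⊕ R(−t₀λ_M)v_M`, where `v = Ax`. -/
def invRep {M : ℕ} [NeZero M] (A : Matrix (Idx M) (Idx M) ℝ) (lam : Fin M → ℝ)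
    (x : Idx M → ℝ) (t₀ : ℝ) : Idx M → ℝ :=
  cat (fun i =>
    if i = 0 then norm2 (blk (A.mulVec x) 0) • e1
    else (R2 (-(t₀ * lam i))).mulVec (blk (A.mulVec x) i))

lemma JJ : Jmat * Jmat = -1 := by
  ext i j; fin_cases i <;> fin_cases j <;> simp [Jmat, Matrix.mul_apply, Fin.sum_univ_two]

def phi : ℂ →+* Matrix (Fin 2) (Fin 2) ℝ where
  toFun z := z.re • (1 : Matrix (Fin 2) (Fin 2) ℝ) + z.im • Jmat
  map_one' := by simp
  map_zero' := by simp
  map_add' z w := by simp [Complex.add_re, Complex.add_im, add_smul]; abel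
  map_mul' z w := by
    simp only [Complex.mul_re, Complex.mul_im, add_mul, mul_add, Matrix.smul_mul,
      Matrix.mul_smul, smul_smul, mul_one, one_mul, JJ, sub_smul, add_smul, smul_neg]
    module

lemma phi_cont : Continuous phi := by
  have : Continuous fun z : ℂ => z.re • (1 : Matrix (Fin 2) (Fin 2) ℝ) + z.im • Jmat := by
    fun_prop
  exact this

lemma R2_eq (θ : ℝ) : R2 θ = Real.cos θ • (1 : Matrix (Fin 2) (Fin 2) ℝ) + Real.sin θ • Jmat := by
  ext i j; fin_cases i <;> fin_cases j <;> simp [R2, Jmat, Matrix.one_apply]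

lemma exp_J (θ : ℝ) : exp (θ • Jmat) = R2 θ := by
  have h1 : θ • Jmat = phi ((θ : ℂ) * Complex.I) := by
    show _ = ((θ:ℂ) * Complex.I).re • (1 : Matrix (Fin 2) (Fin 2) ℝ) + ((θ:ℂ) * Complex.I).im • Jmat
    simp
  rw [h1]
  erw [← map_exp phi phi_cont]
  have h2 : exp ((θ : ℂ) * Complex.I) = Complex.exp ((θ : ℂ) * Complex.I) := by
    rw [Complex.exp_eq_exp_ℂ]
  rw [h2, R2_eq]
  show (Complex.exp ((θ:ℂ) * Complex.I)).re • (1 : Matrix (Fin 2) (Fin 2) ℝ)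
      + (Complex.exp ((θ:ℂ) * Complex.I)).im • Jmat = _
  rw [Complex.exp_ofReal_mul_I_re, Complex.exp_ofReal_mul_I_im]

lemma R2_mul (a b : ℝ) : R2 a * R2 b = R2 (a + b) := by
  ext i j
  fin_cases i <;> fin_cases j <;>
    simp [R2, Matrix.mul_apply, Fin.sum_univ_two, Real.cos_add, Real.sin_add] <;> ring

lemma R2_zero : R2 0 = 1 := by
  ext i j; fin_cases i <;> fin_cases j <;> simp [R2, Matrix.one_apply]

lemma norm2_R2 (θ : ℝ) (u : Fin 2 → ℝ) : norm2 ((R2 θ).mulVec u) = norm2 u := by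
  unfold norm2
  congr 1
  simp [R2, Matrix.mulVec, dotProduct, Fin.sum_univ_two]
  nlinarith [Real.sin_sq_add_cos_sq θ]

lemma blk_bdiag {M : ℕ} (C : Fin M → Matrix (Fin 2) (Fin 2) ℝ) (v : Idx M → ℝ) (i : Fin M) :
    blk ((bdiag C).mulVec v) i = (C i).mulVec (blk v i) := by
  funext p
  simp [blk, bdiag, Matrix.mulVec, dotProduct, Fintype.sum_prod_type,
    Matrix.blockDiagonal_apply, Finset.sum_comm (γ := Fin M)]

lemma R2_mulVec_ne_zero (θ : ℝ) (u : Fin 2 → ℝ) (hu : u ≠ 0) : (R2 θ).mulVec u ≠ 0 := by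
  intro h
  apply hu
  have := congrArg (fun w => (R2 (-θ)).mulVec w) h
  simpa only [Matrix.mulVec_mulVec, R2_mul, neg_add_cancel, R2_zero, Matrix.one_mulVec,
    Matrix.mulVec_zero] using this

/-- If `x' = exp(tB)x` and `v' = Ax'`, then `v'ᵢ = R(tλᵢ)vᵢ` for all `i`,
`v'₁ ≠ 0`, `t + t₀` is valid for `x'`, and `invRep(x'; t + t₀) = invRep(x; t₀)`. -/
theorem stmt5 (M : ℕ) [NeZero M] (A : Matrix (Idx M) (Idx M) ℝ) (hA : A ∈ SOb M)
    (lam : Fin M → ℝ) (B : Matrix (Idx M) (Idx M) ℝ)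
    (hB : B = Aᵀ * bdiag (fun i => lam i • Jmat) * A)
    (x : Idx M → ℝ) (hv : blk (A.mulVec x) 0 ≠ 0)
    (t₀ : ℝ) (ht₀ : valid A lam x t₀)
    (t : ℝ) (x' : Idx M → ℝ) (hx' : x' = (exp (t • B)).mulVec x) :
    (∀ i : Fin M, blk (A.mulVec x') i = (R2 (t * lam i)).mulVec (blk (A.mulVec x) i)) ∧
      blk (A.mulVec x') 0 ≠ 0 ∧
      valid A lam x' (t + t₀) ∧
      invRep A lam x' (t + t₀) = invRep A lam x t₀ := by
  obtain ⟨hAo, hAd⟩ := hA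
  have hinv : A⁻¹ = Aᵀ := Matrix.inv_eq_left_inv hAo
  have hU : IsUnit A := (Matrix.isUnit_iff_isUnit_det A).2 (by rw [hAd]; exact isUnit_one)
  set D : Matrix (Idx M) (Idx M) ℝ := bdiag (fun i => (t * lam i) • Jmat) with hD
  have hDs : t • bdiag (fun i => lam i • Jmat) = D := by
    rw [hD]; unfold bdiag
    ext ⟨p, i⟩ ⟨q, j⟩
    simp [Matrix.blockDiagonal_apply, smul_ite, smul_smul, mul_assoc]
  have htB : t • B = A⁻¹ * D * A := by
    rw [hB, hinv, ← hDs, mul_smul_comm, smul_mul_assoc]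
  have hexp : exp (t • B) = A⁻¹ * exp D * A := by
    rw [htB, Matrix.exp_conj' A D hU]
  have hexpD : exp D = bdiag (fun i => R2 (t * lam i)) := by
    rw [hD]
    unfold bdiag
    rw [Matrix.exp_blockDiagonal]
    exact congrArg _ (funext fun i => (Pi.coe_exp _ i).trans (exp_J (t * lam i)))
  have hv' : A.mulVec x' = (bdiag (fun i => R2 (t * lam i))).mulVec (A.mulVec x) := by
    rw [hx', hexp, hexpD, Matrix.mulVec_mulVec, Matrix.mulVec_mulVec,
      ← Matrix.mul_assoc, ← Matrix.mul_assoc, Matrix.mul_nonsing_inv A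
      (by rw [hAd]; exact isUnit_one), Matrix.one_mul]
  have part1 : ∀ i : Fin M, blk (A.mulVec x') i = (R2 (t * lam i)).mulVec (blk (A.mulVec x) i) := by
    intro i
    rw [hv', blk_bdiag]
  have part2 : blk (A.mulVec x') 0 ≠ 0 := by
    rw [part1 0]
    exact R2_mulVec_ne_zero _ _ hv
  have hnorm : norm2 (blk (A.mulVec x') 0) = norm2 (blk (A.mulVec x) 0) := by
    rw [part1 0, norm2_R2]
  have part3 : valid A lam x' (t + t₀) := by
    unfold valid
    have : (t + t₀) * lam 0 = t * lam 0 + t₀ * lam 0 := by ring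
    rw [this, ← R2_mul, ← Matrix.mulVec_mulVec, ht₀, Matrix.mulVec_smul, ← part1 0, hnorm]
  refine ⟨part1, part2, part3, ?_⟩
  funext pi
  obtain ⟨p, i⟩ := pi
  simp only [invRep, cat]
  by_cases hi : i = 0
  · subst hi
    rw [if_pos rfl, if_pos rfl, hnorm]
  · rw [if_neg hi, if_neg hi, part1 i, Matrix.mulVec_mulVec, R2_mul]
    have : -((t + t₀) * lam i) + t * lam i = -(t₀ * lam i) := by ring
    rw [this]
end
end

section
/- Let n = 2M, let A be an invertible real n×n matrix, λ ∈ ℝᴹ, and L = A⁻¹(⊕ᵢ λᵢ J)A. Let x ∈ ℝⁿ, v = Ax with blocks v₁, …, v_M ∈ ℝ², assume v₁ ≠ 0, and let t₀ ∈ ℝ satisfy R(t₀λ₁)e₁ = v₁/‖v₁‖₂. Then exp(−t₀L)·x = A⁻¹(‖v₁‖₂ e₁ ⊕ R(−t₀λ₂)v₂ ⊕ ⋯ ⊕ R(−t₀λ_M)v_M); in particular A⁻¹·invRep_e(x; t₀) lies on the orbit {exp(tL)x : t ∈ ℝ} of x. -/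
open Matrix NormedSpace

noncomputable section

/-- `H(t)`: the 2×2 hyperbolic rotation with rows (cosh t, sinh t), (sinh t, cosh t). -/
def Hyp (t : ℝ) : Matrix (Fin 2) (Fin 2) ℝ :=
  !![Real.cosh t, Real.sinh t; Real.sinh t, Real.cosh t]

/-- `G(t)`: the 2×2 shear with rows (1, t), (0, 1). -/
def Gm (t : ℝ) : Matrix (Fin 2) (Fin 2) ℝ := !![1, t; 0, 1]

/-- `K`: rows (0, 1), (1, 0). -/
def Kmat : Matrix (Fin 2) (Fin 2) ℝ := !![0, 1; 1, 0]

/-- `N`: rows (0, 1), (0, 0). -/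
def Nmat : Matrix (Fin 2) (Fin 2) ℝ := !![0, 1; 0, 0]

/-- `e₂ = (0, 1) ∈ ℝ²`. -/
def e2 : Fin 2 → ℝ := ![0, 1]

/-- The inverse hyperbolic tangent. -/
def artanh (x : ℝ) : ℝ := Real.log ((1 + x) / (1 - x)) / 2

/-- `t₀` is valid for `x` (elliptic case): `R(t₀λ₁)e₁ = v₁/‖v₁‖₂` where `v = Ax`. -/
def validE {M : ℕ} [NeZero M] (A : Matrix (Idx M) (Idx M) ℝ) (lam : Fin M → ℝ)
    (x : Idx M → ℝ) (t₀ : ℝ) : Prop :=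
  (R2 (t₀ * lam 0)).mulVec e1 = (norm2 (blk (A.mulVec x) 0))⁻¹ • blk (A.mulVec x) 0

/-- `invRep_e(x; t₀) = ‖v₁‖₂ e₁ ⊕ R(−t₀λ₂)v₂ ⊕ ⋯ ⊕ R(−t₀λ_M)v_M`, where `v = Ax`. -/
def invRepE {M : ℕ} [NeZero M] (A : Matrix (Idx M) (Idx M) ℝ) (lam : Fin M → ℝ)
    (x : Idx M → ℝ) (t₀ : ℝ) : Idx M → ℝ :=
  cat (fun i =>
    if i = 0 then norm2 (blk (A.mulVec x) 0) • e1
    else (R2 (-(t₀ * lam i))).mulVec (blk (A.mulVec x) i))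

/-- The hyperbolic parameter `t₀ = artanh(v_{1,2}/v_{1,1})/λ₁`, where `v = Ax`. -/
def t0H {M : ℕ} [NeZero M] (A : Matrix (Idx M) (Idx M) ℝ) (lam : Fin M → ℝ)
    (x : Idx M → ℝ) : ℝ :=
  artanh (blk (A.mulVec x) 0 1 / blk (A.mulVec x) 0 0) / lam 0

/-- `invRep_h(x) = sgn(v_{1,1})√(v_{1,1}² − v_{1,2}²) e₁ ⊕ H(−t₀λ₂)v₂ ⊕ ⋯`, `v = Ax`. -/
def invRepH {M : ℕ} [NeZero M] (A : Matrix (Idx M) (Idx M) ℝ) (lam : Fin M → ℝ)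
    (x : Idx M → ℝ) : Idx M → ℝ :=
  cat (fun i =>
    if i = 0 then
      (Real.sign (blk (A.mulVec x) 0 0) *
        Real.sqrt (blk (A.mulVec x) 0 0 ^ 2 - blk (A.mulVec x) 0 1 ^ 2)) • e1
    else (Hyp (-(t0H A lam x * lam i))).mulVec (blk (A.mulVec x) i))

/-- The parabolic parameter `t₀ = v_{1,1}/(λ₁ v_{1,2})`, where `v = Ax`. -/
def t0P {M : ℕ} [NeZero M] (A : Matrix (Idx M) (Idx M) ℝ) (lam : Fin M → ℝ)
    (x : Idx M → ℝ) : ℝ :=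
  blk (A.mulVec x) 0 0 / (lam 0 * blk (A.mulVec x) 0 1)

/-- `invRep_p(x) = v_{1,2} e₂ ⊕ G(−t₀λ₂)v₂ ⊕ ⋯ ⊕ G(−t₀λ_M)v_M`, where `v = Ax`. -/
def invRepP {M : ℕ} [NeZero M] (A : Matrix (Idx M) (Idx M) ℝ) (lam : Fin M → ℝ)
    (x : Idx M → ℝ) : Idx M → ℝ :=
  cat (fun i =>
    if i = 0 then blk (A.mulVec x) 0 1 • e2
    else (Gm (-(t0P A lam x * lam i))).mulVec (blk (A.mulVec x) i))


/-- The ring hom `ℂ →+* M₂(ℝ)`, `a + bi ↦ !![a, -b; b, a]`. -/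
def cmat : ℂ →+* Matrix (Fin 2) (Fin 2) ℝ where
  toFun z := !![z.re, -z.im; z.im, z.re]
  map_one' := by simp [← Matrix.one_fin_two]
  map_mul' z w := by
    ext i j
    fin_cases i <;> fin_cases j <;>
      simp [Matrix.mul_apply, Fin.sum_univ_two, Complex.mul_re, Complex.mul_im] <;> ring
  map_zero' := by ext i j; fin_cases i <;> fin_cases j <;> simp
  map_add' z w := by
    ext i j
    fin_cases i <;> fin_cases j <;> simp <;> ring

lemma cmat_cont : Continuous cmat := by
  apply continuous_matrix
  intro i j
  fin_cases i <;> fin_cases j <;> simp [cmat] <;> fun_prop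

lemma exp_smul_Jmat (s : ℝ) : NormedSpace.exp (s • Jmat) = R2 s := by
  have h1 : s • Jmat = cmat (s * Complex.I) := by
    ext i j
    fin_cases i <;> fin_cases j <;> simp [cmat, Jmat]
  letI : NormedRing (Matrix (Fin 2) (Fin 2) ℝ) := Matrix.linftyOpNormedRing
  letI : NormedAlgebra ℝ (Matrix (Fin 2) (Fin 2) ℝ) := Matrix.linftyOpNormedAlgebra
  rw [h1]
  erw [← map_exp cmat cmat_cont]
  rw [← Complex.exp_eq_exp_ℂ]
  have h2 : Complex.exp (s * Complex.I) = Complex.cos s + Complex.sin s * Complex.I := by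
    rw [Complex.exp_mul_I]
  rw [h2]
  ext i j
  fin_cases i <;> fin_cases j <;>
    simp [cmat, R2, Complex.cos_ofReal_re, Complex.sin_ofReal_re, Complex.add_re,
      Complex.add_im, Complex.mul_re, Complex.mul_im]

lemma bdiag_mulVec {M : ℕ} (C : Fin M → Matrix (Fin 2) (Fin 2) ℝ) (v : Idx M → ℝ) :
    (bdiag C).mulVec v = cat (fun i => (C i).mulVec (blk v i)) := by
  ext ⟨p, i⟩
  simp only [bdiag, cat, blk, Matrix.mulVec, dotProduct, Matrix.blockDiagonal_apply]
  rw [Fintype.sum_prod_type]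
  rw [Finset.sum_comm]
  simp [ite_mul]

lemma R2_neg_mul (s : ℝ) : R2 (-s) * R2 s = 1 := by
  ext i j
  fin_cases i <;> fin_cases j <;>
    simp [R2, Matrix.mul_apply, Fin.sum_univ_two, Matrix.one_fin_two] <;>
    nlinarith [Real.sin_sq_add_cos_sq s]

lemma norm2_ne_zero {u : Fin 2 → ℝ} (h : u ≠ 0) : norm2 u ≠ 0 := by
  intro hc
  apply h
  have h0 : u 0 ^ 2 + u 1 ^ 2 = 0 := by
    have := Real.sqrt_eq_zero (by positivity) |>.mp hc
    linarith [this]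
  have hu0 : u 0 = 0 := by nlinarith
  have hu1 : u 1 = 0 := by nlinarith
  funext p
  fin_cases p <;> assumption

lemma exp_bdiag {M : ℕ} (C : Fin M → Matrix (Fin 2) (Fin 2) ℝ) :
    NormedSpace.exp (bdiag C) = bdiag (fun i => NormedSpace.exp (C i)) := by
  letI : NormedRing (Matrix (Fin 2) (Fin 2) ℝ) := Matrix.linftyOpNormedRing
  letI : NormedAlgebra ℝ (Matrix (Fin 2) (Fin 2) ℝ) := Matrix.linftyOpNormedAlgebra
  letI : NormedAlgebra ℚ (Matrix (Fin 2) (Fin 2) ℝ) := Matrix.linftyOpNormedAlgebra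
  rw [bdiag, Matrix.exp_blockDiagonal, bdiag]
  erw [Pi.exp_def]
  rfl

/-- **Elliptic orbit representation.** -/
theorem stmt10 (M : ℕ) [NeZero M] (A : Matrix (Idx M) (Idx M) ℝ) (hA : IsUnit A)
    (lam : Fin M → ℝ) (L : Matrix (Idx M) (Idx M) ℝ)
    (hL : L = A⁻¹ * bdiag (fun i => lam i • Jmat) * A)
    (x : Idx M → ℝ) (hv : blk (A.mulVec x) 0 ≠ 0)
    (t₀ : ℝ) (ht₀ : validE A lam x t₀) :
    (NormedSpace.exp ((-t₀) • L)).mulVec x = A⁻¹.mulVec (invRepE A lam x t₀) ∧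
      A⁻¹.mulVec (invRepE A lam x t₀) ∈
        {y | ∃ t : ℝ, y = (NormedSpace.exp (t • L)).mulVec x} := by
  classical
  set v := A.mulVec x with hvdef
  have key : NormedSpace.exp ((-t₀) • L) = A⁻¹ * bdiag (fun i => R2 (-(t₀ * lam i))) * A := by
    rw [hL]
    have h2 : (-t₀) • (A⁻¹ * bdiag (fun i => lam i • Jmat) * A)
        = A⁻¹ * ((-t₀) • bdiag (fun i => lam i • Jmat)) * A := by
      rw [Matrix.mul_smul, Matrix.smul_mul]
    rw [h2]
    have hfun : (-t₀) • (fun i => lam i • Jmat) = fun i => (-(t₀ * lam i)) • Jmat := by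
      funext i
      rw [Pi.smul_apply, smul_smul]
      ring_nf
    have h3 : (-t₀) • bdiag (fun i => lam i • Jmat)
        = bdiag (fun i => (-(t₀ * lam i)) • Jmat) := by
      unfold bdiag
      rw [← Matrix.blockDiagonal_smul, hfun]
    rw [h3, Matrix.exp_conj' A _ hA, exp_bdiag,
      show (fun i => NormedSpace.exp ((-(t₀ * lam i)) • Jmat)) = fun i => R2 (-(t₀ * lam i)) from
        funext fun i => exp_smul_Jmat _]
  have hblk0 : (R2 (-(t₀ * lam 0))).mulVec (blk v 0) = norm2 (blk v 0) • e1 := by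
    have hne : norm2 (blk v 0) ≠ 0 := norm2_ne_zero hv
    have h1 : blk v 0 = norm2 (blk v 0) • (R2 (t₀ * lam 0)).mulVec e1 := by
      rw [ht₀, smul_smul, mul_inv_cancel₀ hne, one_smul]
    conv_lhs => rw [h1]
    rw [Matrix.mulVec_smul, Matrix.mulVec_mulVec, R2_neg_mul, Matrix.one_mulVec]
  have hcat : cat (fun i => (R2 (-(t₀ * lam i))).mulVec (blk v i)) = invRepE A lam x t₀ := by
    funext pi
    obtain ⟨p, i⟩ := pi
    simp only [cat, invRepE]
    by_cases hi : i = 0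
    · subst hi
      rw [if_pos rfl, ← hvdef]
      exact congrFun hblk0 p
    · rw [if_neg hi, ← hvdef]
  have main : (NormedSpace.exp ((-t₀) • L)).mulVec x = A⁻¹.mulVec (invRepE A lam x t₀) := by
    rw [key, ← Matrix.mulVec_mulVec, ← Matrix.mulVec_mulVec, ← hvdef, bdiag_mulVec, hcat]
  exact ⟨main, ⟨-t₀, main.symm⟩⟩
end
end
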